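/- arXiv:math/0608531 — 2 statements merged into one kernel-verified Lean document; each statement's English description precedes it below -/
import Mathlib

section
/- For 0 < α ≤ 1 define the Pick function p_α(z) = 4αz / (1 − z + √((1 − z)² + 4αz))², where the square root denotes the holomorphic branch on the unit disk U of √((1 − z)² + 4αz) taking the value 1 at z = 0 (such a branch exists since (1 − z)² + 4αz has no zeros in U). Then p_α is holomorphic and injective on U, p_α(U) ⊆ U, p_α(0) = 0, p_α'(0) = α, and for 0 < α < 1 the image p_α(U) equals U minus the radial slit (−1, −α/(1 + √(1 − α))²] on the negative real axis. -/
open Complex Set Filter Finset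

noncomputable section

/-- The open unit disk in the complex plane. -/
def unitDisk : Set ℂ := {z : ℂ | ‖z‖ < 1}

/-- A Stolz angle at a boundary point `ζ` with opening parameter `k > 1`. -/
def stolzAngle (ζ : ℂ) (k : ℝ) : Set ℂ :=
  {z | z ∈ unitDisk ∧ ‖z - ζ‖ < k * (1 - ‖z‖)}

/-- `φ` has angular limit `L` at the boundary point `ζ`: `φ z → L` as `z → ζ`
within every Stolz angle at `ζ`. -/
def HasAngularLimit (φ : ℂ → ℂ) (ζ L : ℂ) : Prop :=
  ∀ k : ℝ, 1 < k → Tendsto φ (nhdsWithin ζ (stolzAngle ζ k)) (nhds L)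

/-- `φ` has finite angular limit `L` and finite angular derivative `β` at the
boundary point `ζ`. -/
def HasAngularDerivAt (φ : ℂ → ℂ) (ζ L β : ℂ) : Prop :=
  HasAngularLimit φ ζ L ∧
  ∀ k : ℝ, 1 < k →
    Tendsto (fun z => (φ z - L) / (z - ζ)) (nhdsWithin ζ (stolzAngle ζ k)) (nhds β)

section PickHelpers

lemma sq_lt_one_of_mem {z : ℂ} (hz : z ∈ unitDisk) : z.re^2 + z.im^2 < 1 := by
  have h : ‖z‖ ^ 2 < 1 := by
    have := hz
    simp only [unitDisk, mem_setOf_eq] at this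
    nlinarith [norm_nonneg z]
  rw [Complex.sq_norm, Complex.normSq_apply] at h
  nlinarith

/-- solutions in the disk of t(1-z)^2 = z for real t are real -/
lemma im_eq_zero (t : ℝ) (z : ℂ) (hz : z ∈ unitDisk)
    (h : (t:ℂ) * (1-z)^2 = z) : z.im = 0 := by
  set x := z.re with hx
  set y := z.im with hy
  have hlt : x^2 + y^2 < 1 := sq_lt_one_of_mem hz
  have e1 : t * ((1-x)^2 - y^2) = x := by
    have := congrArg Complex.re h
    simpa [Complex.ext_iff, pow_two, Complex.mul_re, Complex.mul_im,
      Complex.sub_re, Complex.sub_im, ← hx, ← hy] using this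
  have e2 : t * (-2*(1-x)) * y = y := by
    have h2 := congrArg Complex.im h
    simp only [pow_two, Complex.mul_re, Complex.mul_im, Complex.sub_re, Complex.sub_im,
      Complex.one_re, Complex.one_im, Complex.ofReal_re, Complex.ofReal_im, ← hx, ← hy] at h2
    linarith [h2]
  by_contra hy0
  have e2' : t * (-2*(1-x)) = 1 := by
    have h3 : t * (-2*(1-x)) * y = 1 * y := by linarith
    exact mul_right_cancel₀ hy0 h3
  nlinarith [sq_nonneg (2*t*(1-x)), e1, e2', sq_nonneg y, sq_nonneg t]

lemma key (t : ℝ) (ht : t ≤ -(1/4)) (z : ℂ) (hz : z ∈ unitDisk)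
    (h : (t:ℂ) * (1-z)^2 = z) : False := by
  have hy := im_eq_zero t z hz h
  have hlt : z.re^2 + z.im^2 < 1 := sq_lt_one_of_mem hz
  have e1 : t * ((1-z.re)^2 - z.im^2) = z.re := by
    have := congrArg Complex.re h
    simpa [Complex.ext_iff, pow_two, Complex.mul_re, Complex.mul_im,
      Complex.sub_re, Complex.sub_im] using this
  rw [hy] at hlt e1
  nlinarith [sq_nonneg (1+z.re), sq_nonneg (1-z.re)]

lemma sqrt_pos_re {c : ℂ} (hc : c ∈ Complex.slitPlane) :
    ∃ q : ℂ, q^2 = c ∧ 0 < q.re := by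
  set q₀ : ℂ := c ^ ((2:ℕ):ℂ)⁻¹ with hq₀
  have hsq : q₀^2 = c := Complex.cpow_nat_inv_pow c two_ne_zero
  have hre : q₀.re ≠ 0 := by
    intro h0
    have h1 : (q₀^2).re = -(q₀.im^2) := by
      simp [pow_two, Complex.mul_re, h0]
    have h2 : (q₀^2).im = 0 := by
      simp [pow_two, Complex.mul_im, h0]
    rw [hsq] at h1 h2
    rcases hc with h | h
    · nlinarith [sq_nonneg q₀.im]
    · exact h h2
  rcases lt_or_gt_of_ne hre with h | h
  · exact ⟨-q₀, by rw [neg_pow]; simpa using hsq, by simpa using h⟩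
  · exact ⟨q₀, hsq, h⟩

lemma cancel_lemma {z w : ℂ} (hz : z ∈ unitDisk) (hw : w ∈ unitDisk)
    (h : z * (1-w)^2 = w * (1-z)^2) : z = w := by
  have h2 : (z - w) * (1 - z*w) = 0 := by linear_combination h
  rcases mul_eq_zero.1 h2 with h3 | h3
  · exact sub_eq_zero.1 h3
  · exfalso
    have habs : ‖z*w‖ < 1 := by
      rw [norm_mul]
      have hz' : ‖z‖ < 1 := hz
      have hw' : ‖w‖ < 1 := hw
      nlinarith [norm_nonneg z, norm_nonneg w]
    have hzw : z * w = 1 := by linear_combination -h3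
    rw [hzw] at habs; simp at habs

lemma branch_exists (α : ℝ) (hα0 : 0 < α) (hα1 : α ≤ 1) :
    ∃ s : ℂ → ℂ, DifferentiableOn ℂ s unitDisk ∧ s 0 = 1 ∧
      ∀ z ∈ unitDisk, (s z) ^ 2 = (1 - z) ^ 2 + 4 * (α : ℂ) * z := by
  set d : ℝ := Real.sqrt (α * (1-α)) with hd
  have hd2 : d^2 = α*(1-α) := Real.sq_sqrt (by nlinarith)
  set a : ℂ := (1 - 2*α) + 2*d*I with ha
  set b : ℂ := (1 - 2*α) - 2*d*I with hb
  have hdC : ((d:ℂ))^2 = (α:ℂ)*(1-(α:ℂ)) := by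
    rw [← Complex.ofReal_pow, hd2]; push_cast; ring
  have hab : a * b = 1 := by
    rw [ha, hb]
    linear_combination (4:ℂ)*hdC + (-4*(d:ℂ)^2)*Complex.I_sq
  have habs : ‖a‖ = 1 ∧ ‖b‖ = 1 := by
    have h1 : ‖a‖ * ‖b‖ = 1 := by rw [← norm_mul, hab, norm_one]
    have h2 : ‖b‖ = ‖a‖ := by
      have hba : b = (starRingEnd ℂ) a := by
        rw [ha, hb]; simp [Complex.ext_iff]
      rw [hba, Complex.norm_conj]
    constructor <;> nlinarith [norm_nonneg a]
  -- membership in slitPlane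
  have hslit : ∀ (c z : ℂ), ‖c‖ = 1 → z ∈ unitDisk → (1 - c*z) ∈ Complex.slitPlane := by
    intro c z hc hz
    left
    have h1 : ‖c*z‖ < 1 := by rw [norm_mul, hc, one_mul]; exact hz
    have h2 : (c*z).re ≤ ‖c*z‖ := Complex.re_le_norm _
    simp only [Complex.sub_re, Complex.one_re]
    linarith
  refine ⟨fun z => (1 - a*z) ^ ((2:ℕ):ℂ)⁻¹ * (1 - b*z) ^ ((2:ℕ):ℂ)⁻¹, ?_, ?_, ?_⟩
  · intro z hz
    refine DifferentiableAt.differentiableWithinAt (DifferentiableAt.mul ?_ ?_)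
    · exact DifferentiableAt.cpow (by fun_prop) (differentiableAt_const _)
        (hslit a z habs.1 hz)
    · exact DifferentiableAt.cpow (by fun_prop) (differentiableAt_const _)
        (hslit b z habs.2 hz)
  · norm_num
  · intro z hz
    have e1 : ((1 - a*z) ^ ((2:ℕ):ℂ)⁻¹)^(2:ℕ) = 1 - a*z := Complex.cpow_nat_inv_pow _ two_ne_zero
    have e2 : ((1 - b*z) ^ ((2:ℕ):ℂ)⁻¹)^(2:ℕ) = 1 - b*z := Complex.cpow_nat_inv_pow _ two_ne_zero
    have : (1 - a*z) * (1 - b*z) = (1 - z)^2 + 4*(α:ℂ)*z := by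
      rw [ha, hb]
      linear_combination (4*z^2:ℂ)*hdC + (-4*(d:ℂ)^2*z^2)*Complex.I_sq
    calc ((1 - a*z) ^ ((2:ℕ):ℂ)⁻¹ * (1 - b*z) ^ ((2:ℕ):ℂ)⁻¹)^2
        = ((1 - a*z) ^ ((2:ℕ):ℂ)⁻¹)^(2:ℕ) * ((1 - b*z) ^ ((2:ℕ):ℂ)⁻¹)^(2:ℕ) := by ring
      _ = (1 - a*z) * (1 - b*z) := by rw [e1, e2]
      _ = _ := this

lemma unitDisk_eq : unitDisk = Metric.ball (0:ℂ) 1 := by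
  ext z; simp [unitDisk, Metric.mem_ball, Complex.dist_eq]
lemma isOpen_unitDisk : IsOpen unitDisk := by
  rw [unitDisk_eq]; exact Metric.isOpen_ball
lemma zero_mem_unitDisk : (0:ℂ) ∈ unitDisk := by simp [unitDisk]
lemma one_sub_ne_zero {z : ℂ} (hz : z ∈ unitDisk) : (1:ℂ) - z ≠ 0 := by
  intro h
  have : z = 1 := by linear_combination -h
  rw [this] at hz
  simp [unitDisk] at hz

set_option maxHeartbeats 1000000 in
/-- **The Pick function.** For `0 < α ≤ 1` there exists a holomorphic branch `s`
on `U` of `√((1 − z)² + 4αz)` with `s 0 = 1`, and for any such branch the Pick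
function `p_α(z) = 4αz/(1 − z + s z)²` is holomorphic and injective on `U`,
maps `U` into `U`, satisfies `p_α(0) = 0`, `p_α'(0) = α`, and for `α < 1` maps
`U` onto `U` minus the radial slit `(−1, −α/(1 + √(1 − α))²]`. -/
theorem pick_function_properties
    (α : ℝ) (hα0 : 0 < α) (hα1 : α ≤ 1) :
    (∃ s : ℂ → ℂ, DifferentiableOn ℂ s unitDisk ∧ s 0 = 1 ∧
        ∀ z ∈ unitDisk, (s z) ^ 2 = (1 - z) ^ 2 + 4 * (α : ℂ) * z) ∧
    (∀ s : ℂ → ℂ, DifferentiableOn ℂ s unitDisk → s 0 = 1 →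
      (∀ z ∈ unitDisk, (s z) ^ 2 = (1 - z) ^ 2 + 4 * (α : ℂ) * z) →
      ∀ p : ℂ → ℂ, (∀ z, p z = 4 * (α : ℂ) * z / (1 - z + s z) ^ 2) →
        DifferentiableOn ℂ p unitDisk ∧
        InjOn p unitDisk ∧
        MapsTo p unitDisk unitDisk ∧
        p 0 = 0 ∧
        deriv p 0 = (α : ℂ) ∧
        (α < 1 →
          p '' unitDisk =
            unitDisk \
              (Complex.ofReal ''
                Set.Ioc (-1 : ℝ) (-α / (1 + Real.sqrt (1 - α)) ^ 2)))) := by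
  have hαC : (α:ℂ) ≠ 0 := ofReal_ne_zero.2 (ne_of_gt hα0)
  refine ⟨branch_exists α hα0 hα1, ?_⟩
  intro s hs hs0 hs2 p hp
  -- denominator never vanishes
  have hD : ∀ z ∈ unitDisk, (1 - z + s z) ≠ 0 := by
    intro z hz h0
    have h1 := hs2 z hz
    have h2 : s z = z - 1 := by linear_combination h0
    rw [h2] at h1
    have hz0 : z = 0 := by
      have h3 : 4*(α:ℂ)*z = 0 := by linear_combination -h1
      rcases mul_eq_zero.1 h3 with h4 | h4
      · exact absurd h4 (by simp [hαC])
      · exact h4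
    rw [hz0, hs0] at h0
    norm_num at h0
  -- fundamental identity
  have lemA : ∀ z ∈ unitDisk, p z * (1-z)^2 = (α:ℂ) * z * (1 - p z)^2 := by
    intro z hz
    have hDz := hD z hz
    have hsz := hs2 z hz
    have e : 1 - p z = 2*(1-z)/(1-z+s z) := by
      rw [hp z]; field_simp; linear_combination hsz
    rw [e, hp z]
    field_simp
    ring
  -- p 0 = 0
  have hp0 : p 0 = 0 := by rw [hp 0, hs0]; norm_num
  -- differentiability
  have hpdiff : DifferentiableOn ℂ p unitDisk := by
    have : p = fun z => 4 * (α : ℂ) * z / (1 - z + s z) ^ 2 := funext hp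
    rw [this]
    refine DifferentiableOn.div (by fun_prop) ?_ ?_
    · exact DifferentiableOn.pow (by fun_prop) 2
    · intro z hz
      exact pow_ne_zero 2 (hD z hz)
  -- |p z| ≠ 1
  have habs_ne : ∀ z ∈ unitDisk, ‖p z‖ ≠ 1 := by
    intro z hz h1
    set w := p z with hw
    have hww : w * (starRingEnd ℂ) w = 1 := by
      rw [Complex.mul_conj]
      norm_cast
      rw [← Complex.sq_norm, h1]; norm_num
    have hrelt : w.re < 1 := by
      rcases lt_or_eq_of_le (Complex.re_le_norm w) with h | h
      · rw [h1] at h; exact h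
      · exfalso
        have hre1 : w.re = 1 := by rw [h, h1]
        have h2 : Complex.normSq w = 1 := by rw [← Complex.sq_norm, h1]; norm_num
        rw [Complex.normSq_apply, hre1] at h2
        have him : w.im = 0 := by nlinarith
        have hw1 : w = 1 := Complex.ext (by simp [hre1]) (by simp [him])
        have h3 := lemA z hz
        rw [← hw, hw1] at h3
        have h4 : ((1:ℂ) - z)^2 = 0 := by linear_combination h3
        exact one_sub_ne_zero hz (by simpa using sq_eq_zero_iff.1 h4)
    set c : ℝ := 2*w.re - 2 with hc
    have hcneg : c < 0 := by rw [hc]; linarith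
    have hcge : -4 ≤ c := by
      have h5 := Complex.abs_re_le_norm w
      rw [h1] at h5
      have h6 := (abs_le.1 h5).1
      rw [hc]; linarith
    -- (1-z)^2 = α c z
    have hkeyeq : ((1:ℂ)-z)^2 = (α:ℂ)*(c:ℂ)*z := by
      have h3 := lemA z hz
      have h4 : (1-w)^2 * (starRingEnd ℂ) w = (c:ℂ) := by
        have hconj : w + (starRingEnd ℂ) w = ((2*w.re : ℝ) : ℂ) := Complex.add_conj w
        push_cast [hc]
        push_cast at hconj
        linear_combination (w-2)*hww + hconj
      calc ((1:ℂ)-z)^2 = (w * (starRingEnd ℂ) w) * (1-z)^2 := by rw [hww]; ring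
        _ = ((α:ℂ) * z * (1 - w)^2) * (starRingEnd ℂ) w := by
              rw [← hw] at h3; linear_combination ((starRingEnd ℂ) w) * h3
        _ = (α:ℂ) * z * ((1-w)^2 * (starRingEnd ℂ) w) := by ring
        _ = (α:ℂ)*(c:ℂ)*z := by rw [h4]; ring
    have ht : (1:ℝ)/(α*c) ≤ -(1/4) := by
      rw [div_le_iff_of_neg (by nlinarith)]
      nlinarith
    refine key (1/(α*c)) ht z hz ?_
    have hαc : (α:ℂ)*(c:ℂ) ≠ 0 := by
      refine mul_ne_zero hαC (ofReal_ne_zero.2 (ne_of_lt hcneg))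
    push_cast
    rw [div_mul_eq_mul_div, hkeyeq]
    field_simp [ofReal_ne_zero.2 (ne_of_lt hcneg)]
  -- continuity
  have hcontAt : ∀ z ∈ unitDisk, ContinuousAt p z := fun z hz =>
    (hpdiff.differentiableAt (isOpen_unitDisk.mem_nhds hz)).continuousAt
  -- maps to
  have hmaps : MapsTo p unitDisk unitDisk := by
    intro z hz
    by_contra hcon
    have hgt : 1 < ‖p z‖ := by
      rcases lt_trichotomy (‖p z‖) 1 with h | h | h
      · exact absurd h hcon
      · exact absurd h (habs_ne z hz)
      · exact h
    have hpre : IsPreconnected unitDisk := by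
      rw [unitDisk_eq]; exact (convex_ball (0:ℂ) 1).isPreconnected
    set u : Set ℂ := {y | y ∈ unitDisk ∧ ‖p y‖ < 1} with hudef
    set v : Set ℂ := {y | y ∈ unitDisk ∧ 1 < ‖p y‖} with hvdef
    have hou : IsOpen u := by
      rw [isOpen_iff_mem_nhds]
      intro x hx
      have h1 : ∀ᶠ y in nhds x, y ∈ unitDisk := isOpen_unitDisk.eventually_mem hx.1
      have h2 : ∀ᶠ y in nhds x, ‖p y‖ < 1 := by
        have hc : ContinuousAt (fun y => ‖p y‖) x :=
          continuous_norm.continuousAt.comp (hcontAt x hx.1)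
        exact hc.eventually_lt continuousAt_const hx.2
      filter_upwards [h1, h2] with y hy1 hy2
      exact ⟨hy1, hy2⟩
    have hov : IsOpen v := by
      rw [isOpen_iff_mem_nhds]
      intro x hx
      have h1 : ∀ᶠ y in nhds x, y ∈ unitDisk := isOpen_unitDisk.eventually_mem hx.1
      have h2 : ∀ᶠ y in nhds x, 1 < ‖p y‖ := by
        have hc : ContinuousAt (fun y => ‖p y‖) x :=
          continuous_norm.continuousAt.comp (hcontAt x hx.1)
        exact continuousAt_const.eventually_lt hc hx.2
      filter_upwards [h1, h2] with y hy1 hy2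
      exact ⟨hy1, hy2⟩
    have hcover : unitDisk ⊆ u ∪ v := by
      intro y hy
      rcases lt_trichotomy (‖p y‖) 1 with h | h | h
      · exact Or.inl ⟨hy, h⟩
      · exact absurd h (habs_ne y hy)
      · exact Or.inr ⟨hy, h⟩
    have hne1 : (unitDisk ∩ u).Nonempty := by
      refine ⟨0, zero_mem_unitDisk, zero_mem_unitDisk, ?_⟩
      rw [hp0]; simp
    have hne2 : (unitDisk ∩ v).Nonempty := ⟨z, hz, hz, hgt⟩
    obtain ⟨y, _, hyu, hyv⟩ := hpre u v hou hov hcover hne1 hne2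
    exact absurd hyv.2 (not_lt.2 (le_of_lt hyu.2))
  -- injectivity
  have hinj : InjOn p unitDisk := by
    intro z1 h1 z2 h2 heq
    have l1 := lemA z1 h1
    have l2 := lemA z2 h2
    rw [heq] at l1
    have hwU : p z2 ∈ unitDisk := hmaps h2
    have hw1 : (1:ℂ) - p z2 ≠ 0 := one_sub_ne_zero hwU
    have h3 : z1 * (1-z2)^2 = z2 * (1-z1)^2 := by
      have e1 : ((α:ℂ) * (1 - p z2)^2) * (z1 * (1-z2)^2)
          = ((α:ℂ) * (1 - p z2)^2) * (z2 * (1-z1)^2) := by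
        linear_combination (-(1-z2)^2) * l1 + ((1-z1)^2) * l2
      exact mul_left_cancel₀ (mul_ne_zero hαC (pow_ne_zero 2 hw1)) e1
    exact cancel_lemma h1 h2 h3
  -- derivative at 0
  have hderiv : deriv p 0 = (α:ℂ) := by
    have hsd : DifferentiableAt ℂ s 0 :=
      hs.differentiableAt (isOpen_unitDisk.mem_nhds zero_mem_unitDisk)
    have hgd : DifferentiableAt ℂ (fun z => 4*(α:ℂ) / (1 - z + s z)^2) 0 := by
      refine DifferentiableAt.div (differentiableAt_const _)
        (DifferentiableAt.pow (by fun_prop) 2) ?_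
      simp only [sub_zero]
      rw [hs0]
      norm_num
    have hfact : p = fun z => z * (4*(α:ℂ) / (1 - z + s z)^2) := by
      funext z; rw [hp z]; ring
    rw [hfact]
    have h1 := (hasDerivAt_id' (x := (0:ℂ))).mul hgd.hasDerivAt
    rw [(show HasDerivAt (fun z => z * (4*(α:ℂ) / (1 - z + s z)^2)) _ 0 from h1).deriv]
    simp only [sub_zero, hs0, id_eq]
    norm_num
  refine ⟨hpdiff, hinj, hmaps, hp0, hderiv, ?_⟩
  -- image description
  intro hαlt
  obtain ⟨r, hr⟩ : ∃ r, r = Real.sqrt (1-α) := ⟨_, rfl⟩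
  have hr0 : 0 < r := by rw [hr]; exact Real.sqrt_pos.2 (by linarith)
  have hr2 : r^2 = 1-α := by rw [hr]; exact Real.sq_sqrt (by linarith)
  obtain ⟨β, hβ⟩ : ∃ β, β = α/(1+r)^2 := ⟨_, rfl⟩
  have hβpos : 0 < β := by rw [hβ]; positivity
  have hβlt : β < 1 := by rw [hβ, div_lt_one (by positivity)]; nlinarith
  have hc2 : (1+r)^2 = 2*(1+r) - α := by linear_combination hr2
  have h4' : (1+r)^4 + α^2 = (4-2*α)*(1+r)^2 := by
    linear_combination ((1+r)^2 + 2*(1+r) + α) * hc2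
  have hcne : (1+r) ≠ 0 := by positivity
  have hkey3 : β*(1+r)^2 = α := by
    rw [hβ]; field_simp
  have hkey2 : α*(1+β^2) = (4-2*α)*β := by
    have h5 : (α*(1+β^2))*((1+r)^2)^2 = ((4-2*α)*β)*((1+r)^2)^2 := by
      linear_combination α*h4' + (α*(β*(1+r)^2+α) - (4-2*α)*(1+r)^2)*hkey3
    exact mul_right_cancel₀ (by positivity) h5
  have hfac : ∀ x:ℝ, β*(α*x^2 + (4-2*α)*x + α) = α*((x+β)*(β*x+1)) := by
    intro x; linear_combination (-x)*hkey2
  have hub : ∀ x:ℝ, -1 < x → x ≤ -β → 4*x + α*(1-x)^2 ≤ 0 := by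
    intro x h1 h2
    have hb1 : 0 < β*x+1 := by nlinarith
    have h3 : (x+β)*(β*x+1) ≤ 0 := by nlinarith
    have h6 : β*(4*x+α*(1-x)^2) ≤ 0 := by nlinarith [hfac x]
    nlinarith [h6]
  have hlb : ∀ x:ℝ, -1 < x → 4*x + α*(1-x)^2 ≤ 0 → x ≤ -β := by
    intro x h1 h2
    have hb1 : 0 < β*x+1 := by nlinarith
    have h7 : (x+β)*(β*x+1) ≤ 0 := by nlinarith [hfac x]
    by_contra hcon
    push_neg at hcon
    nlinarith [mul_pos (show (0:ℝ) < x+β by linarith) hb1]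
  have hbd : -α / (1 + Real.sqrt (1-α))^2 = -β := by
    rw [hβ, ← hr, neg_div]
  rw [hbd]
  ext w
  simp only [Set.mem_image, mem_diff]
  constructor
  · rintro ⟨z, hz, rfl⟩
    refine ⟨hmaps hz, ?_⟩
    rintro ⟨x, ⟨hx1, hx2⟩, hxw⟩
    have hxneg : x < 0 := lt_of_le_of_lt hx2 (by linarith)
    have h1mx : (0:ℝ) < 1 - x := by linarith
    have l := lemA z hz
    rw [← hxw] at l
    set t := x / (α*(1-x)^2) with htdef
    have ht : t ≤ -(1/4) := by
      rw [htdef, div_le_iff₀ (by positivity)]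
      nlinarith [hub x hx1 hx2]
    refine key t ht z hz ?_
    have h1mxC : ((1:ℂ) - (x:ℂ)) ≠ 0 := by
      intro h
      have : ((1-x : ℝ):ℂ) = 0 := by push_cast; linear_combination h
      rw [Complex.ofReal_eq_zero] at this
      linarith
    have htC : (t:ℂ) = (x:ℂ) / ((α:ℂ)*(1-(x:ℂ))^2) := by
      rw [htdef]; push_cast; ring
    rw [htC]
    rw [div_mul_eq_mul_div, div_eq_iff (by exact mul_ne_zero hαC (pow_ne_zero 2 h1mxC))]
    linear_combination l
  · rintro ⟨hwU, hwslit⟩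
    by_cases hw0 : w = 0
    · exact ⟨0, zero_mem_unitDisk, by rw [hp0, hw0]⟩
    have hw1 : (1:ℂ) - w ≠ 0 := one_sub_ne_zero hwU
    obtain ⟨τ, hτ⟩ : ∃ τ, τ = w / ((α:ℂ)*(1-w)^2) := ⟨_, rfl⟩
    have hτeq : (α:ℂ)*τ*(1-w)^2 = w := by
      rw [hτ]; field_simp
    have hslitc : 4*τ + 1 ∈ Complex.slitPlane := by
      by_contra hns
      rw [Complex.mem_slitPlane_iff] at hns
      push_neg at hns
      obtain ⟨hre, him⟩ := hns
      have hτim : τ.im = 0 := by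
        have h1 : (4*τ+1).im = 4*τ.im := by simp
        rw [him] at h1; linarith
      have hτre : ((τ.re : ℝ) : ℂ) = τ := Complex.ext (by simp) (by simp [hτim])
      have hule : τ.re ≤ -(1/4) := by
        have h1 : (4*τ+1).re = 4*τ.re+1 := by simp
        rw [h1] at hre; linarith
      set u := α * τ.re with hu
      have hueq : ((u:ℝ):ℂ) * (1-w)^2 = w := by
        rw [hu]; push_cast; rw [hτre]; linear_combination hτeq
      by_cases hcase : u ≤ -(1/4)
      · exact key u hcase w hwU hueq
      · push_neg at hcase
        have hwim : w.im = 0 := im_eq_zero u w hwU hueq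
        set x := w.re with hxw
        have hwx : w = ((x:ℝ):ℂ) := Complex.ext (by simp [hxw]) (by simp [hwim])
        have hreq : u * (1-x)^2 = x := by
          rw [hwx] at hueq
          exact_mod_cast hueq
        have hx1 : -1 < x := by nlinarith [sq_lt_one_of_mem hwU, sq_nonneg w.im]
        have hule2 : u ≤ -(α/4) := by
          rw [hu]; nlinarith
        have hxle : x ≤ -β := by
          refine hlb x hx1 ?_
          nlinarith [hreq, sq_nonneg (1-x)]
        exact hwslit ⟨x, ⟨hx1, hxle⟩, hwx.symm⟩
    obtain ⟨q, hq2, hqre⟩ := sqrt_pos_re hslitc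
    have hq1 : q + 1 ≠ 0 := by
      intro h
      have := congrArg Complex.re h
      simp at this
      linarith
    set z := (q-1)/(q+1) with hzdef
    have hzU : z ∈ unitDisk := by
      simp only [unitDisk, mem_setOf_eq, hzdef, norm_div]
      rw [div_lt_one (norm_pos_iff.2 hq1)]
      have h2 : ‖q-1‖ ^2 < ‖q+1‖^2 := by
        rw [Complex.sq_norm, Complex.sq_norm, Complex.normSq_apply, Complex.normSq_apply]
        simp only [Complex.sub_re, Complex.add_re, Complex.sub_im, Complex.add_im,
          Complex.one_re, Complex.one_im]
        nlinarith [hqre]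
      nlinarith [norm_nonneg (q-1), norm_nonneg (q+1)]
    have hz1 : (1:ℂ) - z ≠ 0 := one_sub_ne_zero hzU
    have hzeq : τ * (1-z)^2 = z := by
      have hz1' : (q+1) * z = q - 1 := by rw [hzdef]; field_simp
      have h3 : (q+1) * (1 - z) = 2 := by
        have : (q+1) * (1 - z) = (q+1) - (q+1)*z := by ring
        rw [this, hz1']; ring
      have h2 : (q+1)^2 * (τ * (1-z)^2) = (q+1)^2 * z := by
        calc (q+1)^2 * (τ*(1-z)^2) = τ * ((q+1)*(1-z))^2 := by ring
          _ = 4*τ := by rw [h3]; ring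
          _ = (q+1)*(q-1) := by linear_combination -hq2
          _ = (q+1)*((q+1)*z) := by rw [hz1']
          _ = (q+1)^2 * z := by ring
      exact mul_left_cancel₀ (pow_ne_zero 2 hq1) h2
    refine ⟨z, hzU, ?_⟩
    have l := lemA z hzU
    have hw'U : p z ∈ unitDisk := hmaps hzU
    have hweq : w * (1-z)^2 = (α:ℂ) * z * (1-w)^2 := by
      calc w * (1-z)^2 = ((α:ℂ)*τ*(1-w)^2) * (1-z)^2 := by rw [hτeq]
        _ = (α:ℂ) * (τ*(1-z)^2) * (1-w)^2 := by ring
        _ = (α:ℂ) * z * (1-w)^2 := by rw [hzeq]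
    have h5 : p z * (1-w)^2 = w * (1 - p z)^2 := by
      have e1 : (1-z)^2 * (p z * (1-w)^2) = (1-z)^2 * (w * (1 - p z)^2) := by
        linear_combination (1-w)^2 * l - (1 - p z)^2 * hweq
      exact mul_left_cancel₀ (pow_ne_zero 2 hz1) e1
    exact cancel_lemma hw'U hwU h5
end PickHelpers
end
end

section
/- For 0 < α ≤ 1 let p_α(z) = 4αz / (1 − z + √((1 − z)² + 4αz))² be the Pick function on the unit disk U (with the branch of the square root equal to 1 at z = 0). Then p_α has angular limit 1 at the boundary point 1 and finite angular derivative 1/√α at 1; in particular |p_α'(0)| = α = 1/(p_α'(1))², so p_α attains equality in the bound |φ'(0)| ≥ 1/β² for injective holomorphic self-maps φ of U with φ(0) = 0, angular limit 1 and angular derivative β at the boundary point 1. -/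
open Complex Set Filter Finset

noncomputable section

lemma key_real (α : ℝ) (hα0 : 0 < α) (hα1 : α ≤ 1) (z : ℂ) (hz : ‖z‖ < 1)
    (r : ℝ) (h : (α : ℂ) * z = (r : ℂ) * (1 - z) ^ 2) : -1/4 < r := by
  have hx2 : z.re ^ 2 + z.im ^ 2 < 1 := by
    have := Complex.sq_norm z
    rw [Complex.normSq_apply] at this
    nlinarith [norm_nonneg z]
  rw [Complex.ext_iff] at h
  obtain ⟨h1, h2⟩ := h
  simp [Complex.mul_re, Complex.mul_im, pow_two, Complex.sub_re, Complex.sub_im] at h1 h2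
  by_contra hr
  push_neg at hr
  rcases eq_or_ne z.im 0 with hy | hy
  · rw [hy] at h1 hx2
    simp at h1 hx2
    obtain ⟨hxl, hxr⟩ := abs_lt.1 hx2
    nlinarith [mul_pos hα0 (mul_pos (show (0:ℝ) < 1 + z.re by linarith) (show (0:ℝ) < 1 + z.re by linarith)),
      mul_nonneg (sub_nonneg.2 hα1) (sq_nonneg (1 - z.re)), sq_nonneg (1 - z.re)]
  · have him : α = r * (-2 * (1 - z.re)) := by
      have h2' : α * z.im = (r * (-2 * (1 - z.re))) * z.im := by ring_nf; ring_nf at h2; linarith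
      exact mul_right_cancel₀ hy h2'
    nlinarith [mul_pos (show (0:ℝ) < -r by nlinarith)
        (show (0:ℝ) < 1 - (z.re^2+z.im^2) by nlinarith), h1, him]

lemma quad_slit (α : ℝ) (hα0 : 0 < α) (hα1 : α ≤ 1) (z : ℂ) (hz : ‖z‖ < 1) :
    (1 - z) ^ 2 + 4 * (α : ℂ) * z ∈ Complex.slitPlane := by
  have hx2 : z.re ^ 2 + z.im ^ 2 < 1 := by
    have := Complex.sq_norm z
    rw [Complex.normSq_apply] at this
    nlinarith [norm_nonneg z]
  rw [Complex.mem_slitPlane_iff]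
  by_contra hc
  push_neg at hc
  obtain ⟨hre, him⟩ := hc
  simp [Complex.add_re, Complex.add_im, Complex.mul_re, Complex.mul_im, pow_two,
    Complex.sub_re, Complex.sub_im] at hre him
  rcases eq_or_ne z.im 0 with hy | hy
  · rw [hy] at hre hx2
    simp at hre hx2
    obtain ⟨hxl, hxr⟩ := abs_lt.1 hx2
    nlinarith [mul_pos hα0 (mul_pos (show (0:ℝ) < 1 + z.re by linarith) (show (0:ℝ) < 1 + z.re by linarith)),
      mul_nonneg (sub_nonneg.2 hα1) (sq_nonneg (1 - z.re))]
  · have heq : 2 * α - 1 + z.re = 0 := by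
      have him' : (2 * (2*α - 1 + z.re)) * z.im = 0 := by ring_nf; ring_nf at him; linarith
      rcases mul_eq_zero.1 him' with h | h
      · linarith
      · exact absurd h hy
    nlinarith [hx2, heq, hre]

/-- **The Pick function is extremal for the one-point bound.** For `0 < α ≤ 1`,
the Pick function `p_α(z) = 4αz/(1 − z + s z)²` (with `s` the branch of
`√((1 − z)² + 4αz)` equal to `1` at `0`) has angular limit `1` and finite
angular derivative `1/√α` at the boundary point `1`; moreover
`|p_α'(0)| = α = 1/(p_α'(1))²`, i.e. `p_α` attains equality in the bound
`|φ'(0)| ≥ 1/β²`. -/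
theorem pick_function_attains_equality
    (α : ℝ) (hα0 : 0 < α) (hα1 : α ≤ 1)
    (s : ℂ → ℂ) (hs : DifferentiableOn ℂ s unitDisk) (hs0 : s 0 = 1)
    (hssq : ∀ z ∈ unitDisk, (s z) ^ 2 = (1 - z) ^ 2 + 4 * (α : ℂ) * z)
    (p : ℂ → ℂ) (hp : ∀ z, p z = 4 * (α : ℂ) * z / (1 - z + s z) ^ 2) :
    DifferentiableOn ℂ p unitDisk ∧
    InjOn p unitDisk ∧
    MapsTo p unitDisk unitDisk ∧
    p 0 = 0 ∧
    HasAngularDerivAt p 1 1 ((1 / Real.sqrt α : ℝ) : ℂ) ∧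
    ‖deriv p 0‖ = α ∧
    α = 1 / (1 / Real.sqrt α) ^ 2 := by
  have hαC : ((α : ℂ)) ≠ 0 := by exact_mod_cast hα0.ne'
  have hUopen : IsOpen unitDisk := by
    have : unitDisk = Metric.ball (0:ℂ) 1 := by
      ext z; simp [unitDisk, Metric.mem_ball, Complex.dist_eq]
    rw [this]; exact Metric.isOpen_ball
  have hUconv : Convex ℝ unitDisk := by
    have : unitDisk = Metric.ball (0:ℂ) 1 := by
      ext z; simp [unitDisk, Metric.mem_ball, Complex.dist_eq]
    rw [this]; exact convex_ball 0 1
  have h0U : (0:ℂ) ∈ unitDisk := by simp [unitDisk]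
  have hz1 : ∀ z ∈ unitDisk, (1:ℂ) - z ≠ 0 := by
    intro z hz h
    have hz1' : z = 1 := by linear_combination -h
    rw [hz1'] at hz; simp [unitDisk] at hz
  have hd : ∀ z ∈ unitDisk, 1 - z + s z ≠ 0 := by
    intro z hz h
    have hsz : s z = z - 1 := by linear_combination h
    have h4 : 4 * (α:ℂ) * z = 0 := by
      have := hssq z hz
      rw [hsz] at this
      linear_combination -this
    have hz0 : z = 0 := by
      rcases mul_eq_zero.1 h4 with h' | h'
      · exact absurd h' (by simpa using hαC)
      · exact h'
    rw [hz0] at hsz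
    rw [hs0] at hsz
    norm_num at hsz
  have hdiffp : DifferentiableOn ℂ p unitDisk := by
    have hpfun : p = fun z => 4 * (α : ℂ) * z / (1 - z + s z) ^ 2 := funext hp
    rw [hpfun]
    exact DifferentiableOn.div
      (by fun_prop)
      (DifferentiableOn.pow (by fun_prop) 2)
      (fun z hz => pow_ne_zero 2 (hd z hz))
  have h1p : ∀ z ∈ unitDisk, 1 - p z = 2 * (1 - z) / (1 - z + s z) := by
    intro z hz
    rw [hp]
    field_simp [hd z hz]
    linear_combination hssq z hz
  have hkoebe : ∀ z ∈ unitDisk, p z * (1 - z)^2 = (α:ℂ) * z * (1 - p z)^2 := by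
    intro z hz
    rw [h1p z hz, hp]
    field_simp [hd z hz]
    ring
  have h1pne : ∀ z ∈ unitDisk, 1 - p z ≠ 0 := by
    intro z hz
    rw [h1p z hz]
    exact div_ne_zero (mul_ne_zero two_ne_zero (hz1 z hz)) (hd z hz)
  have hp0 : p 0 = 0 := by rw [hp]; simp
  -- |p z| ≠ 1 on the disk
  have hne1 : ∀ z ∈ unitDisk, ‖p z‖ ≠ 1 := by
    intro z hz habs
    set w := p z with hw
    have hw1 : 1 - w ≠ 0 := h1pne z hz
    set N := Complex.normSq (1 - w) with hN
    have hNpos : 0 < N := Complex.normSq_pos.2 hw1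
    have hN4 : N ≤ 4 := by
      have h2 : ‖1 - w‖ ≤ 2 := by
        calc ‖1 - w‖ ≤ ‖(1:ℂ)‖ + ‖w‖ := by
              simpa using norm_sub_le (1:ℂ) w
        _ = 2 := by rw [habs]; norm_num
      have habs2 : ‖1 - w‖ ^ 2 ≤ 4 := by nlinarith [norm_nonneg (1 - w)]
      rw [hN, Complex.normSq_eq_norm_sq]
      linarith
    have hconj : w * (starRingEnd ℂ) w = 1 := by
      rw [Complex.mul_conj]
      rw [show Complex.normSq w = 1 by rw [Complex.normSq_eq_norm_sq, habs]; norm_num]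
      simp
    have hNc : (1 - w) * (1 - (starRingEnd ℂ) w) = (N : ℂ) := by
      rw [hN]
      rw [← Complex.mul_conj]
      simp
    have hkey : (α : ℂ) * z = ((-1/N : ℝ) : ℂ) * (1 - z)^2 := by
      have hk := hkoebe z hz
      rw [← hw] at hk
      have hNne : (N:ℂ) ≠ 0 := by exact_mod_cast hNpos.ne'
      push_cast
      rw [div_mul_eq_mul_div, eq_div_iff hNne]
      linear_combination (starRingEnd ℂ) w * hk - (α:ℂ) * z * hNc -
        ((1-z)^2 + (α:ℂ) * z * (1 - w)) * hconj
    have hkr := key_real α hα0 hα1 z hz (-1/N) hkey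
    have hinvN : (-1/N) * N = -1 := by field_simp
    have h4N : (4:ℝ) < N := by nlinarith [mul_lt_mul_of_pos_right hkr hNpos, hinvN]
    linarith
  -- maps to
  have hmaps : MapsTo p unitDisk unitDisk := by
    intro z hz
    by_contra hge
    simp only [unitDisk, mem_setOf_eq, not_lt] at hge
    have hgt : 1 < ‖p z‖ := lt_of_le_of_ne hge (Ne.symm (hne1 z hz))
    have hmem : ∀ t ∈ Icc (0:ℝ) 1, ((t:ℂ) * z) ∈ unitDisk := by
      intro t ht
      simp only [unitDisk, mem_setOf_eq, norm_mul, Complex.norm_real, Real.norm_eq_abs]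
      calc |t| * ‖z‖ ≤ 1 * ‖z‖ := by
            apply mul_le_mul_of_nonneg_right _ (norm_nonneg z)
            rw [abs_le]; exact ⟨by linarith [ht.1], ht.2⟩
        _ < 1 := by rw [one_mul]; exact hz
    have hcont : ContinuousOn (fun t : ℝ => ‖p ((t:ℂ) * z)‖) (Icc 0 1) := by
      apply continuous_norm.comp_continuousOn
      apply hdiffp.continuousOn.comp _ hmem
      exact Continuous.continuousOn (by continuity)
    have hIcc := intermediate_value_Icc (by norm_num : (0:ℝ) ≤ 1) hcont
    have h1mem : (1:ℝ) ∈ Icc (‖p (((0:ℝ):ℂ) * z)‖) (‖p (((1:ℝ):ℂ) * z)‖) := by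
      constructor
      · simp only [Complex.ofReal_zero, zero_mul]
        rw [hp0]; simp
      · simp only [Complex.ofReal_one, one_mul]
        exact hgt.le
    obtain ⟨t, ht, hteq⟩ := hIcc h1mem
    exact hne1 _ (hmem t ht) hteq
  -- injectivity
  have hinj : InjOn p unitDisk := by
    intro z1 h1 z2 h2 he
    have k1 := hkoebe z1 h1
    have k2 := hkoebe z2 h2
    rw [he] at k1
    have hwne : ((α:ℂ) * (1 - p z2)^2) ≠ 0 := mul_ne_zero hαC (pow_ne_zero 2 (h1pne z2 h2))
    have hcross : z1 * (1 - z2)^2 = z2 * (1 - z1)^2 := by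
      apply mul_left_cancel₀ hwne
      linear_combination (1-z1)^2 * k2 - (1-z2)^2 * k1
    have hfact : (z1 - z2) * (1 - z1 * z2) = 0 := by linear_combination hcross
    rcases mul_eq_zero.1 hfact with h | h
    · linear_combination h
    · exfalso
      have : ‖z1 * z2‖ < 1 := by
        rw [norm_mul]
        calc ‖z1‖ * ‖z2‖ ≤ 1 * ‖z2‖ := by
              apply mul_le_mul_of_nonneg_right (le_of_lt h1) (norm_nonneg z2)
        _ < 1 := by rw [one_mul]; exact h2
      have h12 : z1 * z2 = 1 := by linear_combination -h
      rw [h12] at this; simp at this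
  -- the branch identity on the disk
  have hs_eq : ∀ z ∈ unitDisk, s z = ((1 - z)^2 + 4*(α:ℂ)*z) ^ ((1:ℂ)/2) := by
    set q : ℂ → ℂ := fun z => (1 - z)^2 + 4*(α:ℂ)*z with hqdef
    have hqslit : ∀ z ∈ unitDisk, q z ∈ Complex.slitPlane := fun z hz => quad_slit α hα0 hα1 z hz
    have hqne : ∀ z ∈ unitDisk, q z ≠ 0 := fun z hz => Complex.slitPlane_ne_zero (hqslit z hz)
    have hqcont : Continuous q := by rw [hqdef]; fun_prop
    have hrcont : ContinuousOn (fun z => (q z) ^ ((1:ℂ)/2)) unitDisk := by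
      intro z hz
      exact ((continuousAt_cpow_const (hqslit z hz)).comp hqcont.continuousAt).continuousWithinAt
    have hrne : ∀ z ∈ unitDisk, (q z) ^ ((1:ℂ)/2) ≠ 0 := by
      intro z hz
      simp only [ne_eq, Complex.cpow_eq_zero_iff, not_and_or]
      exact Or.inl (hqne z hz)
    have hrsq : ∀ z ∈ unitDisk, ((q z) ^ ((1:ℂ)/2))^2 = q z := by
      intro z hz
      rw [pow_two, ← Complex.cpow_add _ _ (hqne z hz)]
      norm_num
    set c : ℂ → ℂ := fun z => s z / (q z) ^ ((1:ℂ)/2) with hcdef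
    have hccont : ContinuousOn c unitDisk := hs.continuousOn.div hrcont (fun z hz => hrne z hz)
    have hcsq : ∀ z ∈ unitDisk, c z = 1 ∨ c z = -1 := by
      intro z hz
      have hsq : (c z)^2 = 1 := by
        rw [hcdef]
        simp only [div_pow]
        rw [hrsq z hz, hssq z hz]
        exact div_self (hqne z hz)
      have hfact : (c z - 1) * (c z + 1) = 0 := by linear_combination hsq
      rcases mul_eq_zero.1 hfact with h | h
      · left; linear_combination h
      · right; linear_combination h
    have hq0 : q 0 = 1 := by rw [hqdef]; norm_num
    have hc0 : c 0 = 1 := by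
      rw [hcdef]
      simp only [hq0, Complex.one_cpow, hs0, div_one]
    intro z hz
    have hc1 : c z = 1 := by
      by_contra hcne
      have hcz : c z = -1 := (hcsq z hz).resolve_left hcne
      have hpre : IsPreconnected unitDisk := hUconv.isPreconnected
      have hrecont : ContinuousOn (fun w => (c w).re) unitDisk :=
        Complex.continuous_re.comp_continuousOn hccont
      have hIVT := hpre.intermediate_value hz h0U hrecont
      have h0mem : (0:ℝ) ∈ Icc ((c z).re) ((c 0).re) := by
        rw [hcz, hc0]; norm_num
      obtain ⟨z', hz', hz'eq⟩ := hIVT h0mem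
      have hz'eq' : (c z').re = 0 := hz'eq
      rcases hcsq z' hz' with h | h <;> rw [h] at hz'eq' <;> norm_num at hz'eq'
    have : s z = (q z) ^ ((1:ℂ)/2) := by
      have := hc1
      rw [hcdef] at this
      exact (div_eq_one_iff_eq (hrne z hz)).1 this
    exact this
  -- angular derivative
  have hsqrtpos : 0 < Real.sqrt α := Real.sqrt_pos.2 hα0
  have h2s : ((2 * Real.sqrt α : ℝ) : ℂ) ≠ 0 := by
    exact_mod_cast (by positivity : (2 * Real.sqrt α : ℝ) ≠ 0)
  have hval : ((4*α:ℝ):ℂ) ^ ((1:ℂ)/2) = ((2*Real.sqrt α : ℝ) : ℂ) := by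
    rw [show ((1:ℂ)/2) = (((1/2 : ℝ) : ℝ):ℂ) by norm_num,
      ← Complex.ofReal_cpow (by positivity : (0:ℝ) ≤ 4*α)]
    congr 1
    have h4 : (4*α : ℝ) = (2*Real.sqrt α)^(2:ℕ) := by
      rw [mul_pow, Real.sq_sqrt hα0.le]; norm_num
    rw [h4, ← Real.rpow_natCast (2*Real.sqrt α) 2, ← Real.rpow_mul (by positivity)]
    norm_num
  have hlims : ∀ k : ℝ, 1 < k →
      Tendsto s (nhdsWithin 1 (stolzAngle 1 k)) (nhds ((2*Real.sqrt α : ℝ) : ℂ)) := by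
    intro k hk
    have hsub : stolzAngle 1 k ⊆ unitDisk := fun z hz => hz.1
    have hqt : Tendsto (fun z : ℂ => (1 - z)^2 + 4*(α:ℂ)*z)
        (nhdsWithin 1 (stolzAngle 1 k)) (nhds ((4*α : ℝ) : ℂ)) := by
      apply Tendsto.mono_left _ nhdsWithin_le_nhds
      apply Continuous.tendsto' (by fun_prop)
      push_cast; ring
    have hcp : Tendsto (fun w : ℂ => w ^ ((1:ℂ)/2)) (nhds ((4*α:ℝ):ℂ))
        (nhds (((4*α:ℝ):ℂ) ^ ((1:ℂ)/2))) := by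
      apply (continuousAt_cpow_const _).tendsto
      exact Or.inl (by simp; positivity)
    have hcomp := hcp.comp hqt
    rw [hval] at hcomp
    apply hcomp.congr'
    filter_upwards [eventually_mem_nhdsWithin] with z hzS
    exact (hs_eq z (hsub hzS)).symm
  have hdt : ∀ k : ℝ, 1 < k → Tendsto (fun z => 1 - z + s z)
      (nhdsWithin 1 (stolzAngle 1 k)) (nhds ((2*Real.sqrt α : ℝ) : ℂ)) := by
    intro k hk
    have hzt : Tendsto (fun z : ℂ => 1 - z) (nhdsWithin 1 (stolzAngle 1 k)) (nhds 0) := by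
      apply Tendsto.mono_left _ nhdsWithin_le_nhds
      apply Continuous.tendsto' (by fun_prop)
      ring
    simpa using hzt.add (hlims k hk)
  have hang : HasAngularDerivAt p 1 1 ((1 / Real.sqrt α : ℝ) : ℂ) := by
    constructor
    · intro k hk
      have hsub : stolzAngle 1 k ⊆ unitDisk := fun z hz => hz.1
      have hzt : Tendsto (fun z : ℂ => 2*(1 - z)) (nhdsWithin 1 (stolzAngle 1 k)) (nhds 0) := by
        apply Tendsto.mono_left _ nhdsWithin_le_nhds
        apply Continuous.tendsto' (by fun_prop)
        ring
      have hfrac : Tendsto (fun z => 1 - (2*(1-z))/(1-z+s z)) (nhdsWithin 1 (stolzAngle 1 k))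
          (nhds (1 - 0 / ((2*Real.sqrt α:ℝ):ℂ))) :=
        Tendsto.sub tendsto_const_nhds (hzt.div (hdt k hk) h2s)
      have hone : (1:ℂ) - 0 / ((2*Real.sqrt α : ℝ) : ℂ) = 1 := by simp
      rw [hone] at hfrac
      apply hfrac.congr'
      filter_upwards [eventually_mem_nhdsWithin] with z hzS
      have := h1p z (hsub hzS)
      linear_combination this
    · intro k hk
      have hsub : stolzAngle 1 k ⊆ unitDisk := fun z hz => hz.1
      have hfrac : Tendsto (fun z => 2/(1-z+s z)) (nhdsWithin 1 (stolzAngle 1 k))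
          (nhds ((2:ℂ) / ((2*Real.sqrt α : ℝ) : ℂ))) :=
        Tendsto.div tendsto_const_nhds (hdt k hk) h2s
      have hsC : ((Real.sqrt α : ℝ) : ℂ) ≠ 0 := by exact_mod_cast hsqrtpos.ne'
      have hone : (2:ℂ) / ((2*Real.sqrt α : ℝ) : ℂ) = ((1 / Real.sqrt α : ℝ) : ℂ) := by
        push_cast
        field_simp
      rw [hone] at hfrac
      apply hfrac.congr'
      filter_upwards [eventually_mem_nhdsWithin] with z hzS
      have hzU := hsub hzS
      have hz1' : z - 1 ≠ 0 := by
        intro h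
        have : z = 1 := by linear_combination h
        rw [this] at hzU; simp [unitDisk] at hzU
      have hd' := hd z hzU
      have hmul : (1 - p z) * (1 - z + s z) = 2*(1-z) := by
        rw [h1p z hzU]
        field_simp
      rw [div_eq_div_iff hd' hz1']
      linear_combination hmul
  -- deriv at 0
  have hderiv : ‖deriv p 0‖ = α := by
    have hpeq : p = fun z => 4*(α:ℂ)*z / (1 - z + s z)^2 := funext hp
    have hds0 : DifferentiableAt ℂ s 0 := hs.differentiableAt (hUopen.mem_nhds h0U)
    have hgdiff : DifferentiableAt ℂ (fun z : ℂ => (1 - z + s z)^2) 0 := by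
      apply DifferentiableAt.pow
      exact ((differentiableAt_const _).sub differentiableAt_id).add hds0
    have hgd := hgdiff.hasDerivAt
    have hf : HasDerivAt (fun z : ℂ => 4*(α:ℂ)*z) (4*(α:ℂ)) 0 := by
      simpa using (hasDerivAt_id (0:ℂ)).const_mul (4*(α:ℂ))
    have h40 : ((1:ℂ) - 0 + s 0)^2 = 4 := by rw [hs0]; norm_num
    have hdiv := hf.div hgd (show ((1:ℂ) - 0 + s 0)^2 ≠ 0 by rw [h40]; norm_num)
    have hval : deriv (fun z : ℂ => 4*(α:ℂ)*z / (1 - z + s z)^2) 0 = (α:ℂ) := by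
      rw [HasDerivAt.deriv (f := fun z : ℂ => 4*(α:ℂ)*z / (1 - z + s z)^2) hdiv]
      norm_num [hs0]
      ring_nf
    rw [hpeq, hval]
    simp [Complex.norm_real, abs_of_pos hα0]
  refine ⟨hdiffp, hinj, hmaps, hp0, hang, hderiv, ?_⟩
  have h1 : (1/Real.sqrt α)^2 = 1/α := by rw [div_pow, one_pow, Real.sq_sqrt hα0.le]
  rw [h1, one_div_one_div]
end
end
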